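/- Let G = SL₂(ℂ) (or any rank-one simple group), and let E be an irreducible finite-dimensional G-module of dimension n. Fix m < n. For any nonzero vector k ∈ E and any irreducible G-submodule E₀ of the m-fold exterior power Λ^m E, the linear map x ↦ x ∧ k from Λ^m E to Λ^{m+1} E does not annihilate E₀. -/

import Mathlib

open ExteriorAlgebra

lemma contractRight_exteriorPower_mem {E : Type*} [AddCommGroup E] [Module ℂ E]
    (d : Module.Dual ℂ E) {i : ℕ} {x : ExteriorAlgebra ℂ E} (hx : x ∈ ⋀[ℂ]^i E) :
    CliffordAlgebra.contractRight x d ∈ ⋀[ℂ]^(i-1) E := by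
  induction hx using Submodule.pow_induction_on_right' with
  | algebraMap r =>
      rw [CliffordAlgebra.contractRight_algebraMap]; exact Submodule.zero_mem _
  | add x y i hx hy ihx ihy =>
      rw [map_add, LinearMap.add_apply]; exact add_mem ihx ihy
  | mul_mem i x hx ih m hm =>
      obtain ⟨v, rfl⟩ := hm
      show CliffordAlgebra.contractRight (x * ι ℂ v) d ∈ ⋀[ℂ]^i E
      rw [CliffordAlgebra.contractRight_mul_ι]
      refine sub_mem (Submodule.smul_mem _ _ hx) ?_
      rcases Nat.eq_zero_or_pos i with rfl | hi
      · obtain ⟨r, rfl⟩ := Submodule.mem_one.mp (by simpa using hx)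
        rw [CliffordAlgebra.contractRight_algebraMap, zero_mul]
        exact Submodule.zero_mem _
      · have h1 : CliffordAlgebra.contractRight x d * ι ℂ v ∈
            (⋀[ℂ]^(i-1) E) * LinearMap.range (ι ℂ : E →ₗ[ℂ] ExteriorAlgebra ℂ E) :=
          Submodule.mul_mem_mul ih (LinearMap.mem_range_self _ v)
        have he : (⋀[ℂ]^(i-1) E) * LinearMap.range (ι ℂ : E →ₗ[ℂ] ExteriorAlgebra ℂ E)
            = ⋀[ℂ]^i E := by
          rw [show LinearMap.range (ι ℂ : E →ₗ[ℂ] ExteriorAlgebra ℂ E)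
              = LinearMap.range (ι ℂ : E →ₗ[ℂ] ExteriorAlgebra ℂ E) ^ 1 from (pow_one _).symm,
            ← pow_add]
          congr 1
          omega
        exact he ▸ h1

lemma key_annihilate {E : Type*} [AddCommGroup E] [Module ℂ E] {n : ℕ}
    (b : Module.Basis (Fin n) ℂ E) :
    ∀ m : ℕ, ∀ x ∈ ⋀[ℂ]^m E, ∀ g : Fin (m+1) → Fin n, Function.Injective g →
      (∀ j, x * ι ℂ (b (g j)) = 0) → x = 0 := by
  intro m
  induction m with
  | zero =>
      intro x hx g hg h
      obtain ⟨r, rfl⟩ := Submodule.mem_one.mp (by simpa using hx)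
      have h0 := h 0
      rw [← Algebra.smul_def, ← map_smul, ι_eq_zero_iff] at h0
      have hr : r = 0 := by
        by_contra hr
        exact b.ne_zero (g 0) (by
          have := congrArg (fun w => r⁻¹ • w) h0
          simpa [smul_smul, inv_mul_cancel₀ hr] using this)
      simp [hr]
  | succ m ih =>
      intro x hx g hg h
      set d : Module.Dual ℂ E := b.coord (g (Fin.last (m+1))) with hd
      have hkey : ∀ j : Fin (m+2),
          CliffordAlgebra.contractRight x d * ι ℂ (b (g j)) = d (b (g j)) • x := by
        intro j
        have h2 := congrArg (fun z => CliffordAlgebra.contractRight z d) (h j)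
        simp only [map_zero, LinearMap.zero_apply] at h2
        rw [CliffordAlgebra.contractRight_mul_ι] at h2
        exact (sub_eq_zero.mp h2).symm
      have hy : CliffordAlgebra.contractRight x d ∈ ⋀[ℂ]^m E := by
        simpa using contractRight_exteriorPower_mem d hx
      have hcoord : ∀ j : Fin (m+1), d (b (g (Fin.castSucc j))) = 0 := by
        intro j
        rw [hd, Module.Basis.coord_apply, Module.Basis.repr_self, Finsupp.single_apply]
        rw [if_neg]
        intro hgj
        exact Fin.ne_last_of_lt (Fin.castSucc_lt_last j) (hg hgj)
      have hy0 : CliffordAlgebra.contractRight x d = 0 := by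
        refine ih _ hy (fun j => g (Fin.castSucc j))
          (fun a c hac => Fin.castSucc_injective _ (hg hac)) (fun j => ?_)
        rw [hkey (Fin.castSucc j), hcoord j, zero_smul]
      have hlast := hkey (Fin.last (m+1))
      rw [hy0, zero_mul, hd, Module.Basis.coord_apply, Module.Basis.repr_self, Finsupp.single_eq_same,
        one_smul] at hlast
      exact hlast.symm

/-- Let `G = SL₂(ℂ)` act irreducibly on an `n`-dimensional space `E`, let `m < n`,
let `kvec ∈ E` be nonzero, and let `E₀` be a nonzero irreducible `G`-submodule of the
`m`-th exterior power `⋀[ℂ]^m E`. Then the map `x ↦ x ∧ kvec` does not annihilate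
`E₀`: there is `x ∈ E₀` with `x ∧ kvec ≠ 0`. -/
theorem stmt15 {E : Type*} [AddCommGroup E] [Module ℂ E] [FiniteDimensional ℂ E]
    {n : ℕ} (hn : Module.finrank ℂ E = n)
    (ρ : Representation ℂ (Matrix.SpecialLinearGroup (Fin 2) ℂ) E)
    (hirr : ∀ W : Submodule ℂ E,
      (∀ g, W.map (ρ g) = W) → W = ⊥ ∨ W = ⊤)
    (m : ℕ) (hm : m < n)
    (E₀ : Submodule ℂ (ExteriorAlgebra ℂ E)) (hE₀m : E₀ ≤ ⋀[ℂ]^m E)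
    (hE₀inv : ∀ g, E₀.map (ExteriorAlgebra.map (ρ g)).toLinearMap = E₀)
    (hE₀ne : E₀ ≠ ⊥)
    (hE₀irr : ∀ W : Submodule ℂ (ExteriorAlgebra ℂ E), W ≤ E₀ →
      (∀ g, W.map (ExteriorAlgebra.map (ρ g)).toLinearMap = W) → W = ⊥ ∨ W = E₀)
    (kvec : E) (hk : kvec ≠ 0) :
    ∃ x ∈ E₀, x * ExteriorAlgebra.ι ℂ kvec ≠ 0 := by
  by_contra hcon
  push_neg at hcon
  obtain ⟨x₀, hx₀E, hx₀ne⟩ := Submodule.exists_mem_ne_zero_of_ne_bot hE₀ne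
  -- the whole orbit of kvec annihilates x₀
  have horb : ∀ g, x₀ * ι ℂ (ρ g kvec) = 0 := by
    intro g
    have hx₀' : x₀ ∈ E₀.map (ExteriorAlgebra.map (ρ g)).toLinearMap := (hE₀inv g).symm ▸ hx₀E
    obtain ⟨y, hyE₀, hyx⟩ := hx₀'
    have : x₀ * ι ℂ (ρ g kvec)
        = (ExteriorAlgebra.map (ρ g)) (y * ι ℂ kvec) := by
      rw [map_mul, ExteriorAlgebra.map_apply_ι]
      exact congrArg (· * ι ℂ (ρ g kvec)) hyx.symm
    rw [this, hcon y hyE₀, map_zero]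
  -- the span of the orbit is invariant and nonzero, hence all of E
  set V : Submodule ℂ E := Submodule.span ℂ (Set.range fun g => ρ g kvec) with hV
  have hVle : ∀ g, V.map (ρ g) ≤ V := by
    intro g
    rw [hV, Submodule.map_span, Submodule.span_le]
    rintro _ ⟨_, ⟨h, rfl⟩, rfl⟩
    exact Submodule.subset_span ⟨g * h, by show ρ (g * h) kvec = _; rw [map_mul]; rfl⟩
  have hVinv : ∀ g, V.map (ρ g) = V := by
    intro g
    refine le_antisymm (hVle g) ?_
    have hid : (ρ g).comp (ρ g⁻¹) = LinearMap.id := by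
      rw [← Module.End.mul_eq_comp, ← map_mul, mul_inv_cancel, map_one]; rfl
    calc V = (V.map (ρ g⁻¹)).map (ρ g) := by
              rw [← Submodule.map_comp, hid, Submodule.map_id]
      _ ≤ V.map (ρ g) := Submodule.map_mono (hVle g⁻¹)
  have hkV : kvec ∈ V := Submodule.subset_span ⟨1, by show ρ 1 kvec = kvec; rw [map_one]; rfl⟩
  have hVtop : V = ⊤ := by
    rcases hirr V hVinv with hbot | htop
    · exact absurd (hbot ▸ hkV) (by simpa using hk)
    · exact htop
  -- hence x₀ * ι v = 0 for every v
  have hall : ∀ v : E, x₀ * ι ℂ v = 0 := by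
    intro v
    have hv : v ∈ V := hVtop ▸ Submodule.mem_top
    induction hv using Submodule.span_induction with
    | mem w hw => obtain ⟨g, rfl⟩ := hw; exact horb g
    | zero => rw [map_zero, mul_zero]
    | add a c _ _ ha hc => rw [map_add, mul_add, ha, hc, add_zero]
    | smul r a _ ha => rw [map_smul, mul_smul_comm, ha, smul_zero]
  -- conclude x₀ = 0 using the basis
  have hn0 : m + 1 ≤ n := hm
  let b : Module.Basis (Fin n) ℂ E := (Module.finBasis ℂ E).reindex (finCongr hn)
  have : x₀ = 0 :=
    key_annihilate b m x₀ (hE₀m hx₀E) (Fin.castLE hn0)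
      (Fin.castLE_injective hn0) (fun j => hall _)
  exact hx₀ne this
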